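/- For every s ∈ (0,1) and every λ > 0, the integral ∫₀^∞ t^{-s-1}(e^{-λt} - 1) dt converges and equals Γ(-s)·λ^s, where Γ denotes the Gamma function (extended to negative non-integer arguments via the functional equation Γ(x+1) = x·Γ(x)). -/

import Mathlib

open MeasureTheory Real Set Filter

lemma aux_cont (a lam : ℝ) :
    ContinuousOn (fun t : ℝ => t ^ a * (Real.exp (-(lam * t)) - 1)) (Set.Ioi 0) :=
  (continuousOn_id.rpow_const (fun x hx => Or.inl (ne_of_gt hx))).mul
    (((Real.continuous_exp.comp ((continuous_const.mul continuous_id).neg)).sub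
      continuous_const).continuousOn)

lemma aux_cont' (a lam : ℝ) :
    ContinuousOn (fun t : ℝ => t ^ a * Real.exp (-(lam * t))) (Set.Ioi 0) :=
  (continuousOn_id.rpow_const (fun x hx => Or.inl (ne_of_gt hx))).mul
    ((Real.continuous_exp.comp ((continuous_const.mul continuous_id).neg)).continuousOn)

/-- For every `s ∈ (0,1)` and every `λ > 0`, the integral
`∫₀^∞ t^(-s-1) (e^(-λ t) - 1) dt` converges and equals `Γ(-s) · λ^s`. -/
theorem stmt_0 (s lam : ℝ) (hs : s ∈ Set.Ioo (0 : ℝ) 1) (hlam : 0 < lam) :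
    IntegrableOn (fun t : ℝ => t ^ (-s - 1) * (Real.exp (-(lam * t)) - 1))
      (Set.Ioi (0 : ℝ)) volume ∧
    ∫ t in Set.Ioi (0 : ℝ), t ^ (-s - 1) * (Real.exp (-(lam * t)) - 1) =
      Real.Gamma (-s) * lam ^ s := by
  obtain ⟨hs0, hs1⟩ := hs
  have hs0' : s ≠ 0 := ne_of_gt hs0
  have hlam' : lam ≠ 0 := ne_of_gt hlam
  set g : ℝ → ℝ := fun t => t ^ (-s - 1) * (Real.exp (-(lam * t)) - 1) with hgdef
  set h : ℝ → ℝ := fun t => t ^ (-s) * Real.exp (-(lam * t)) with hhdef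
  -- basic exp bounds
  have hexp_le_one : ∀ t : ℝ, 0 ≤ t → Real.exp (-(lam * t)) ≤ 1 := by
    intro t ht
    rw [Real.exp_le_one_iff]
    nlinarith
  have hexp_lin : ∀ t : ℝ, 1 - Real.exp (-(lam * t)) ≤ lam * t := by
    intro t
    have := Real.add_one_le_exp (-(lam * t))
    linarith
  -- integrability of g
  have hint_g : IntegrableOn g (Ioi 0) volume := by
    have h1 : IntegrableOn g (Ioc 0 1) volume := by
      have hmaj : IntegrableOn (fun t : ℝ => lam * t ^ (-s)) (Ioc 0 1) volume := by
        exact Integrable.const_mul ((intervalIntegrable_iff_integrableOn_Ioc_of_le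
          zero_le_one).mp (intervalIntegral.intervalIntegrable_rpow' (by linarith))) lam
      refine Integrable.mono' hmaj (((aux_cont _ _).mono Ioc_subset_Ioi_self).aestronglyMeasurable
        measurableSet_Ioc) ?_
      filter_upwards [ae_restrict_mem measurableSet_Ioc] with t ht
      obtain ⟨ht0, ht1⟩ := ht
      have htp : (0:ℝ) < t := ht0
      have h1 : |Real.exp (-(lam * t)) - 1| ≤ lam * t := by
        rw [abs_sub_comm, abs_of_nonneg (by linarith [hexp_le_one t htp.le])]
        exact hexp_lin t
      have h2 : (0:ℝ) ≤ t ^ (-s - 1) := (Real.rpow_pos_of_pos htp _).le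
      calc ‖g t‖ = t ^ (-s - 1) * |Real.exp (-(lam * t)) - 1| := by
            rw [norm_mul, Real.norm_eq_abs, abs_of_nonneg h2, Real.norm_eq_abs]
        _ ≤ t ^ (-s - 1) * (lam * t) := by
            exact mul_le_mul_of_nonneg_left h1 h2
        _ = lam * (t ^ (-s - 1) * t ^ (1:ℝ)) := by rw [Real.rpow_one]; ring
        _ = lam * t ^ (-s) := by rw [← Real.rpow_add htp]; norm_num
    have h2 : IntegrableOn g (Ioi 1) volume := by
      have hmaj : IntegrableOn (fun t : ℝ => t ^ (-s - 1)) (Ioi 1) volume :=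
        integrableOn_Ioi_rpow_of_lt (by linarith) one_pos
      refine Integrable.mono' hmaj (((aux_cont _ _).mono (Ioi_subset_Ioi
        zero_le_one)).aestronglyMeasurable measurableSet_Ioi) ?_
      filter_upwards [ae_restrict_mem measurableSet_Ioi] with t ht
      have htp : (0:ℝ) < t := lt_trans one_pos ht
      have h1 : |Real.exp (-(lam * t)) - 1| ≤ 1 := by
        rw [abs_sub_comm, abs_of_nonneg (by linarith [hexp_le_one t htp.le])]
        linarith [Real.exp_pos (-(lam * t))]
      have h2 : (0:ℝ) ≤ t ^ (-s - 1) := (Real.rpow_pos_of_pos htp _).le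
      calc ‖g t‖ = t ^ (-s - 1) * |Real.exp (-(lam * t)) - 1| := by
            rw [norm_mul, Real.norm_eq_abs, abs_of_nonneg h2, Real.norm_eq_abs]
        _ ≤ t ^ (-s - 1) * 1 := mul_le_mul_of_nonneg_left h1 h2
        _ = t ^ (-s - 1) := mul_one _
    have : Ioi (0:ℝ) = Ioc 0 1 ∪ Ioi 1 := (Ioc_union_Ioi_eq_Ioi zero_le_one).symm
    rw [this]
    exact h1.union h2
  -- integrability of h

  have hint_h : IntegrableOn h (Ioi 0) volume := by
    have h1 : IntegrableOn h (Ioc 0 1) volume := by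
      have hmaj : IntegrableOn (fun t : ℝ => t ^ (-s)) (Ioc 0 1) volume := by
        exact (intervalIntegrable_iff_integrableOn_Ioc_of_le
          zero_le_one).mp (intervalIntegral.intervalIntegrable_rpow' (by linarith))
      refine Integrable.mono' hmaj (((aux_cont' _ _).mono Ioc_subset_Ioi_self).aestronglyMeasurable
        measurableSet_Ioc) ?_
      filter_upwards [ae_restrict_mem measurableSet_Ioc] with t ht
      obtain ⟨ht0, ht1⟩ := ht
      have h2 : (0:ℝ) ≤ t ^ (-s) := (Real.rpow_pos_of_pos ht0 _).le
      calc ‖h t‖ = t ^ (-s) * Real.exp (-(lam * t)) := by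
            rw [norm_mul, Real.norm_eq_abs, abs_of_nonneg h2, Real.norm_eq_abs,
              abs_of_pos (Real.exp_pos _)]
        _ ≤ t ^ (-s) * 1 := mul_le_mul_of_nonneg_left (hexp_le_one t ht0.le) h2
        _ = t ^ (-s) := mul_one _
    have h2 : IntegrableOn h (Ioi 1) volume := by
      have hmaj : IntegrableOn (fun t : ℝ => Real.exp (-lam * t)) (Ioi 1) volume :=
        exp_neg_integrableOn_Ioi 1 hlam
      refine Integrable.mono' hmaj (((aux_cont' _ _).mono (Ioi_subset_Ioi
        zero_le_one)).aestronglyMeasurable measurableSet_Ioi) ?_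
      filter_upwards [ae_restrict_mem measurableSet_Ioi] with t ht
      have htp : (0:ℝ) < t := lt_trans one_pos ht
      have h2 : (0:ℝ) ≤ t ^ (-s) := (Real.rpow_pos_of_pos htp _).le
      have h3 : t ^ (-s) ≤ 1 :=
        Real.rpow_le_one_of_one_le_of_nonpos (le_of_lt ht) (by linarith)
      calc ‖h t‖ = t ^ (-s) * Real.exp (-(lam * t)) := by
            rw [norm_mul, Real.norm_eq_abs, abs_of_nonneg h2, Real.norm_eq_abs,
              abs_of_pos (Real.exp_pos _)]
        _ ≤ 1 * Real.exp (-(lam * t)) :=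
            mul_le_mul_of_nonneg_right h3 (Real.exp_pos _).le
        _ = Real.exp (-lam * t) := by rw [one_mul, neg_mul]
    have : Ioi (0:ℝ) = Ioc 0 1 ∪ Ioi 1 := (Ioc_union_Ioi_eq_Ioi zero_le_one).symm
    rw [this]
    exact h1.union h2
  refine ⟨hint_g, ?_⟩
  -- antiderivative
  set F : ℝ → ℝ := fun t => (-(1/s)) * (t ^ (-s) * (Real.exp (-(lam * t)) - 1)) with hFdef
  have hF0 : F 0 = 0 := by
    simp [hFdef, Real.zero_rpow (neg_ne_zero.mpr hs0')]
  have hderiv : ∀ x ∈ Ioi (0:ℝ), HasDerivAt F (g x + (lam / s) * h x) x := by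
    intro x hx
    have hx0 : (0:ℝ) < x := hx
    have d1 : HasDerivAt (fun t : ℝ => t ^ (-s)) (-s * x ^ (-s - 1)) x := by
      simpa using Real.hasDerivAt_rpow_const (p := -s) (Or.inl hx0.ne')
    have d2 : HasDerivAt (fun t : ℝ => Real.exp (-(lam * t)) - 1)
        (-lam * Real.exp (-(lam * x))) x := by
      have : HasDerivAt (fun t : ℝ => -(lam * t)) (-lam) x := by
        exact HasDerivAt.neg (by simpa using (hasDerivAt_id x).const_mul lam)
      simpa [mul_comm] using ((Real.hasDerivAt_exp _).comp x this).sub_const 1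
    have this : HasDerivAt F _ x := ((d1.mul d2).const_mul (-(1/s)))
    convert this using 1
    simp only [hgdef, hhdef]
    field_simp
    ring
  -- limit at infinity
  have hlim : Filter.Tendsto F Filter.atTop (nhds 0) := by
    have h1 : Filter.Tendsto (fun t : ℝ => t ^ (-s)) Filter.atTop (nhds 0) :=
      tendsto_rpow_neg_atTop hs0
    have hmt : Filter.Tendsto (fun t : ℝ => -(lam * t)) Filter.atTop Filter.atBot := by
      have : Filter.Tendsto (fun t : ℝ => lam * t) Filter.atTop Filter.atTop :=
        Filter.Tendsto.const_mul_atTop hlam Filter.tendsto_id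
      exact Filter.tendsto_neg_atBot_iff.mpr this
    have h2 : Filter.Tendsto (fun t : ℝ => Real.exp (-(lam * t)) - 1) Filter.atTop
        (nhds (0 - 1)) :=
      (Real.tendsto_exp_atBot.comp hmt).sub_const 1
    have := ((h1.mul h2).const_mul (-(1/s)))
    rw [hFdef]
    simpa using this
  -- continuity at 0 from the right
  have hcont : ContinuousWithinAt F (Ici 0) 0 := by
    rw [ContinuousWithinAt, hF0]
    have hb : Filter.Tendsto (fun t : ℝ => (1/s) * lam * t ^ (1 - s)) (nhdsWithin 0 (Ici 0))
        (nhds 0) := by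
      have hc : ContinuousAt (fun t : ℝ => t ^ (1 - s)) 0 :=
        Real.continuousAt_rpow_const 0 (1 - s) (Or.inr (by linarith))
      have : Filter.Tendsto (fun t : ℝ => t ^ (1 - s)) (nhdsWithin 0 (Ici 0))
          (nhds ((0:ℝ) ^ (1 - s))) := (hc.tendsto).mono_left nhdsWithin_le_nhds
      rw [Real.zero_rpow (by linarith : 1 - s ≠ 0)] at this
      simpa using this.const_mul ((1/s) * lam)
    refine squeeze_zero_norm' ?_ hb
    filter_upwards [self_mem_nhdsWithin] with t ht
    rcases eq_or_lt_of_le (mem_Ici.mp ht) with rfl | htp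
    · simp [hF0, Real.zero_rpow (by linarith : 1 - s ≠ 0)]
    have h2 : (0:ℝ) ≤ t ^ (-s) := (Real.rpow_pos_of_pos htp _).le
    have h3 : |Real.exp (-(lam * t)) - 1| ≤ lam * t := by
      rw [abs_sub_comm, abs_of_nonneg (by linarith [hexp_le_one t htp.le])]
      exact hexp_lin t
    calc ‖F t‖ = (1/s) * (t ^ (-s) * |Real.exp (-(lam * t)) - 1|) := by
          rw [hFdef]
          simp only [norm_mul, Real.norm_eq_abs, abs_neg, abs_of_nonneg (by positivity : (0:ℝ) ≤ 1/s),
            abs_of_nonneg h2]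
      _ ≤ (1/s) * (t ^ (-s) * (lam * t)) := by
          have := mul_le_mul_of_nonneg_left h3 h2
          have h4 : (0:ℝ) ≤ 1/s := by positivity
          nlinarith
      _ = (1/s) * lam * (t ^ (-s) * t ^ (1:ℝ)) := by rw [Real.rpow_one]; ring
      _ = (1/s) * lam * t ^ (1 - s) := by
          rw [← Real.rpow_add htp, show -s + (1:ℝ) = 1 - s by ring]
  -- apply FTC
  have hintF' : IntegrableOn (fun x => g x + (lam / s) * h x) (Ioi 0) volume :=
    hint_g.add (hint_h.const_mul _)
  have key := integral_Ioi_of_hasDerivAt_of_tendsto hcont hderiv hintF' hlim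
  rw [hF0, sub_zero] at key
  rw [integral_add hint_g (hint_h.const_mul _), integral_const_mul] at key
  have hI : (∫ t in Ioi (0:ℝ), h t) = (1/lam) ^ (1 - s) * Real.Gamma (1 - s) := by
    have := integral_rpow_mul_exp_neg_mul_Ioi (a := 1 - s) (r := lam) (by linarith) hlam
    rw [show (1:ℝ) - s - 1 = -s by ring] at this
    exact this
  have hG : Real.Gamma (1 - s) = -s * Real.Gamma (-s) := by
    have := Real.Gamma_add_one (neg_ne_zero.mpr hs0')
    rw [show -s + 1 = 1 - s by ring] at this
    exact this
  have hgoal : (∫ t in Ioi (0:ℝ), g t) = -(lam / s * ((1/lam) ^ (1 - s) * Real.Gamma (1 - s))) := by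
    rw [← hI]; linarith
  rw [hgoal, hG]
  rw [one_div, ← Real.rpow_neg_one lam, ← Real.rpow_mul hlam.le,
    show (-1:ℝ) * (1 - s) = s - 1 by ring, Real.rpow_sub hlam, Real.rpow_one]
  have hlp : lam ^ s ≠ 0 := (Real.rpow_pos_of_pos hlam s).ne'
  field_simp
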